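/- Fix an integer d ≥ 2 and α with 1/2 ≤ α < 1/2 + 1/(2d) (and α ≤ 1), and let ρ_W be the Werner state with parameter α on ℂ^d ⊗ ℂ^d. Then 0 < Tr[(ρ_W^{T_A})³] < Tr[ρ_W³], both traces being real. -/

import Mathlib

set_option maxHeartbeats 1600000


/-- Partial transpose on the `A` factor:
`(X^{T_A})_{(a,b),(a',b')} = X_{(a',b),(a,b')}`. -/
def partialTransposeA {A B : Type*} (X : Matrix (A × B) (A × B) ℂ) :
    Matrix (A × B) (A × B) ℂ :=
  fun p q => X (q.1, p.2) (p.1, q.2)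

/-- The swap matrix on `ℂ^d ⊗ ℂ^d`: `S_{(i,j),(k,l)} = δ_{i,l} δ_{j,k}`. -/
def swapMatrix (d : ℕ) : Matrix (Fin d × Fin d) (Fin d × Fin d) ℂ :=
  fun p q => if p.1 = q.2 ∧ p.2 = q.1 then 1 else 0

/-- The projector `Π₊ = (I + S)/2` onto the symmetric subspace. -/
noncomputable def symProj (d : ℕ) : Matrix (Fin d × Fin d) (Fin d × Fin d) ℂ :=
  (2 : ℂ)⁻¹ • (1 + swapMatrix d)

/-- The projector `Π₋ = (I − S)/2` onto the antisymmetric subspace. -/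
noncomputable def antisymProj (d : ℕ) : Matrix (Fin d × Fin d) (Fin d × Fin d) ℂ :=
  (2 : ℂ)⁻¹ • (1 - swapMatrix d)

/-- The Werner state with parameter `α`:
`ρ_W = α·Π₊/(d(d+1)/2) + (1−α)·Π₋/(d(d−1)/2)`. -/
noncomputable def wernerState (d : ℕ) (α : ℝ) :
    Matrix (Fin d × Fin d) (Fin d × Fin d) ℂ :=
  ((α : ℂ) / ((d : ℂ) * ((d : ℂ) + 1) / 2)) • symProj d +
    (((1 - α : ℝ) : ℂ) / ((d : ℂ) * ((d : ℂ) - 1) / 2)) • antisymProj d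

/-- The projector onto the maximally entangled state:
`(Δ₀)_{(i,j),(k,l)} = δ_{i,j} δ_{k,l} / d`. -/
noncomputable def maxEntProj (d : ℕ) : Matrix (Fin d × Fin d) (Fin d × Fin d) ℂ :=
  fun p q => (if p.1 = p.2 ∧ q.1 = q.2 then 1 else 0) / (d : ℂ)

/-- `d` times the maximally entangled projector (the partial transpose of the swap). -/
def Tmat (d : ℕ) : Matrix (Fin d × Fin d) (Fin d × Fin d) ℂ :=
  fun p q => if p.1 = p.2 ∧ q.1 = q.2 then 1 else 0

lemma swap_sq (d : ℕ) : swapMatrix d * swapMatrix d = 1 := by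
  ext p q
  simp [swapMatrix, Matrix.mul_apply, Fintype.sum_prod_type, Matrix.one_apply,
    Prod.ext_iff, ite_and, Finset.sum_ite_eq, Finset.sum_ite_eq', and_comm, eq_comm]

lemma swap_trace (d : ℕ) : (swapMatrix d).trace = (d : ℂ) := by
  simp [Matrix.trace, Matrix.diag, swapMatrix, Fintype.sum_prod_type, ite_and,
    Finset.sum_ite_eq, Finset.sum_ite_eq']

lemma T_sq (d : ℕ) : Tmat d * Tmat d = (d : ℂ) • Tmat d := by
  ext p q
  simp [Tmat, Matrix.mul_apply, Fintype.sum_prod_type, ite_and,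
    Finset.sum_ite_eq, Finset.sum_ite_eq', Finset.mul_sum, Finset.sum_mul, mul_ite]
  by_cases h1 : p.1 = p.2 <;> by_cases h2 : q.1 = q.2 <;> simp [h1, h2]

lemma T_trace (d : ℕ) : (Tmat d).trace = (d : ℂ) := by
  show (∑ p : Fin d × Fin d, if p.1 = p.2 ∧ p.1 = p.2 then (1:ℂ) else 0) = d
  rw [Fintype.sum_prod_type]
  simp [Finset.sum_ite_eq]

lemma cube1 {n : Type*} [Fintype n] [DecidableEq n] (x y : ℂ) (M : Matrix n n ℂ)
    (hM : M * M = 1) :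
    (x • (1 : Matrix n n ℂ) + y • M) ^ 3
      = (x^3 + 3*x*y^2) • (1 : Matrix n n ℂ) + (3*x^2*y + y^3) • M := by
  rw [pow_succ, pow_two]
  simp only [add_mul, mul_add, Matrix.smul_mul, Matrix.mul_smul, hM,
    Matrix.mul_one, Matrix.one_mul, smul_smul, smul_add]
  module

lemma cubeT {n : Type*} [Fintype n] [DecidableEq n] (x y w : ℂ) (M : Matrix n n ℂ)
    (hM : M * M = w • M) :
    (x • (1 : Matrix n n ℂ) + y • M) ^ 3
      = x^3 • (1 : Matrix n n ℂ) + (3*x^2*y + 3*x*y^2*w + y^3*w^2) • M := by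
  rw [pow_succ, pow_two]
  simp only [add_mul, mul_add, Matrix.smul_mul, Matrix.mul_smul, hM,
    Matrix.mul_one, Matrix.one_mul, smul_smul, smul_add]
  module

lemma werner_eq (d : ℕ) (α : ℝ) :
    wernerState d α
      = ((((α : ℂ) / ((d : ℂ) * ((d : ℂ) + 1) / 2)) + (((1 - α : ℝ) : ℂ) / ((d : ℂ) * ((d : ℂ) - 1) / 2))) / 2) • (1 : Matrix (Fin d × Fin d) (Fin d × Fin d) ℂ)
        + ((((α : ℂ) / ((d : ℂ) * ((d : ℂ) + 1) / 2)) - (((1 - α : ℝ) : ℂ) / ((d : ℂ) * ((d : ℂ) - 1) / 2))) / 2) • swapMatrix d := by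
  unfold wernerState symProj antisymProj
  module

lemma pt_eq (d : ℕ) (x y : ℂ) :
    partialTransposeA (x • (1 : Matrix (Fin d × Fin d) (Fin d × Fin d) ℂ) + y • swapMatrix d)
      = x • (1 : Matrix (Fin d × Fin d) (Fin d × Fin d) ℂ) + y • Tmat d := by
  ext p q
  simp only [partialTransposeA, Matrix.add_apply, Matrix.smul_apply, Matrix.one_apply,
    swapMatrix, Tmat, Prod.mk.injEq, Prod.ext_iff]
  by_cases h1 : p.1 = q.1 <;> by_cases h2 : p.2 = q.2 <;> by_cases h3 : p.1 = p.2 <;>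
    by_cases h4 : q.1 = q.2 <;> simp_all [eq_comm]

lemma trace_comb (d : ℕ) (x y : ℂ) (M : Matrix (Fin d × Fin d) (Fin d × Fin d) ℂ)
    (hM : M.trace = (d : ℂ)) :
    (x • (1 : Matrix (Fin d × Fin d) (Fin d × Fin d) ℂ) + y • M).trace
      = x * (d : ℂ)^2 + y * (d : ℂ) := by
  rw [Matrix.trace_add, Matrix.trace_smul, Matrix.trace_smul, Matrix.trace_one, hM]
  simp only [smul_eq_mul, Fintype.card_prod, Fintype.card_fin]
  push_cast
  ring

/-- **`R₃` can be positive on separable Werner states.**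
For `d ≥ 2` and `1/2 ≤ α < 1/2 + 1/(2d)` (with `α ≤ 1`), the (separable) Werner
state satisfies `0 < Tr[(ρ_W^{T_A})³] < Tr[ρ_W³]`, both traces being real. -/
theorem wernerState_R3_positive (d : ℕ) (hd : 2 ≤ d) (α : ℝ)
    (hα₁ : 1 / 2 ≤ α) (hα₂ : α < 1 / 2 + 1 / (2 * d)) (hα₃ : α ≤ 1) :
    ∃ p₃ s₃ : ℝ,
      ((partialTransposeA (wernerState d α)) ^ 3).trace = (p₃ : ℂ) ∧
      ((wernerState d α) ^ 3).trace = (s₃ : ℂ) ∧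
      0 < p₃ ∧ p₃ < s₃ := by
  -- real scalars
  set Dr : ℝ := (d : ℝ) with hDr
  have hD2 : (2 : ℝ) ≤ Dr := by rw [hDr]; exact_mod_cast hd
  have hD0 : (0:ℝ) < Dr := by linarith
  have hDm1 : (0:ℝ) < Dr - 1 := by linarith
  have hDp1 : (0:ℝ) < Dr + 1 := by linarith
  set aR : ℝ := α / (Dr * (Dr + 1) / 2) with haR
  set bR : ℝ := (1 - α) / (Dr * (Dr - 1) / 2) with hbR
  set cR : ℝ := (aR + bR) / 2 with hcR
  set sR : ℝ := (aR - bR) / 2 with hsR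
  set p₃ : ℝ := cR^3 * Dr^2 + (3*cR^2*sR + 3*cR*sR^2*Dr + sR^3*Dr^2) * Dr with hp₃
  set s₃ : ℝ := (cR^3 + 3*cR*sR^2) * Dr^2 + (3*cR^2*sR + sR^3) * Dr with hs₃
  have hc : ((cR : ℝ) : ℂ)
      = (((α : ℂ) / ((d : ℂ) * ((d : ℂ) + 1) / 2)) + (((1 - α : ℝ) : ℂ) / ((d : ℂ) * ((d : ℂ) - 1) / 2))) / 2 := by
    rw [hcR, haR, hbR, hDr]; push_cast; ring
  have hs : ((sR : ℝ) : ℂ)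
      = (((α : ℂ) / ((d : ℂ) * ((d : ℂ) + 1) / 2)) - (((1 - α : ℝ) : ℂ) / ((d : ℂ) * ((d : ℂ) - 1) / 2))) / 2 := by
    rw [hsR, haR, hbR, hDr]; push_cast; ring
  -- algebraic setup for the inequalities
  set t : ℝ := 2 * α - 1 with htdef
  set u : ℝ := Dr - t with hudef
  set v : ℝ := t * Dr - 1 with hvdef
  set E : ℝ := Dr * (Dr ^ 2 - 1) with hEdef
  have hE0 : (0:ℝ) < E := by rw [hEdef]; nlinarith
  have hEne : E ≠ 0 := ne_of_gt hE0
  have ht0 : 0 ≤ t := by rw [htdef]; linarith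
  have htDr : t * Dr < 1 := by
    have h1 : α * Dr < (1/2 + 1/(2*Dr)) * Dr := mul_lt_mul_of_pos_right hα₂ hD0
    have h2 : (1/2 + 1/(2*Dr)) * Dr = Dr/2 + 1/2 := by field_simp
    rw [htdef]; nlinarith
  have ht1 : t ≤ 1 := by rw [htdef]; linarith
  have hcv : cR = u / E := by
    rw [hcR, haR, hbR, hudef, htdef, hEdef]
    have hq : Dr^2 - 1 ≠ 0 := ne_of_gt (by nlinarith)
    field_simp
    ring
  have hsv : sR = v / E := by
    rw [hsR, haR, hbR, hvdef, htdef, hEdef]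
    have hq : Dr^2 - 1 ≠ 0 := ne_of_gt (by nlinarith)
    field_simp
    ring
  have hu0 : (0:ℝ) < u := by rw [hudef]; linarith
  refine ⟨p₃, s₃, ?_, ?_, ?_, ?_⟩
  · rw [werner_eq, pt_eq, cubeT _ _ _ _ (T_sq d), trace_comb _ _ _ _ (T_trace d)]
    rw [hp₃]
    push_cast
    rw [hc, hs, hDr]
    push_cast
    ring
  · rw [werner_eq, cube1 _ _ _ (swap_sq d), trace_comb _ _ _ _ (swap_trace d)]
    rw [hs₃]
    push_cast
    rw [hc, hs, hDr]
    push_cast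
    ring
  · have hkey : p₃ = ((Dr^2 - 1) * u^3 + t^3 * (Dr^2 - 1)^3) / E^3 := by
      rw [hp₃, hcv, hsv]
      field_simp
      rw [hudef, hvdef, htdef]
      ring
    rw [hkey]
    have h1 : (0:ℝ) < Dr^2 - 1 := by nlinarith
    positivity
  · have hkey : s₃ - p₃ = (1 - t * Dr)^3 / E^2 := by
      rw [hs₃, hp₃, hcv, hsv]
      field_simp
      rw [hudef, hvdef, hEdef, htdef]
      ring
    have h1 : (0:ℝ) < 1 - t * Dr := by linarith
    have h2 : (0:ℝ) < (1 - t * Dr)^3 / E^2 := div_pos (pow_pos h1 3) (pow_pos hE0 2)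
    linarith
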